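/- Let a and b be two distinct symbols. The Rudin–Shapiro word on {a, b} satisfies condition ♠ with constant c = 25. -/

import Mathlib

open scoped BigOperators

/-- A `p`-adic floor function: values in `ℤ[1/p]`, `‖x - s x‖_p < 1`, `s 0 = 0`,
and `s` is constant on open unit balls. -/
structure PadicFloor (p : ℕ) [Fact p.Prime] where
  toFun : ℚ_[p] → ℚ_[p]
  zinv : ∀ x, ∃ (m : ℤ) (k : ℕ), toFun x = (m : ℚ_[p]) / (p : ℚ_[p]) ^ k
  norm_sub_lt : ∀ x, ‖x - toFun x‖ < 1
  map_zero' : toFun 0 = 0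
  eq_of_close : ∀ x y, ‖x - y‖ < 1 → toFun x = toFun y

/-- `l` is a prefix of the infinite word `ω` (indexed from 0). -/
def IsPrefixOf {A : Type*} (l : List A) (ω : ℕ → A) : Prop :=
  ∀ (i : ℕ) (h : i < l.length), l.get ⟨i, h⟩ = ω i

/-- `ω` is ultimately periodic. -/
def UltPeriodic {A : Type*} (ω : ℕ → A) : Prop :=
  ∃ N k : ℕ, 0 < k ∧ ∀ n, N ≤ n → ω (n + k) = ω n

/-- Condition ♠ with constant `c`. -/
def Spade {A : Type*} (ω : ℕ → A) (c : ℝ) : Prop :=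
  ¬ UltPeriodic ω ∧
  ∃ W U V : ℕ → List A,
    (∀ n, U n ≠ []) ∧
    (∀ n, IsPrefixOf (W n ++ (U n ++ (V n ++ U n))) ω) ∧
    (∀ n, ((V n).length : ℝ) ≤ c * (U n).length) ∧
    (∀ n, ((W n).length : ℝ) ≤ c * (U n).length) ∧
    (∀ m : ℕ, ∃ n, m < (U n).length)

/-- Condition ♣ with constant `c`. -/
def Club {A : Type*} (ω : ℕ → A) (c : ℝ) : Prop :=
  ¬ UltPeriodic ω ∧
  ∃ W U V : ℕ → List A,
    (∀ n, U n ≠ []) ∧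
    (∀ n, IsPrefixOf (W n ++ (U n ++ (V n ++ (U n).reverse))) ω) ∧
    (∀ n, ((V n).length : ℝ) ≤ c * (U n).length) ∧
    (∀ n, ((W n).length : ℝ) ≤ c * (U n).length) ∧
    (∀ m : ℕ, ∃ n, m < (U n).length)

/-- The Rudin–Shapiro word on the alphabet `{a, b}`: the `n`-th letter (indexed from 0) is
`a` iff the number of (possibly overlapping) occurrences of the block `11` in the binary
expansion of `n` is even. -/
def rudinShapiroWord {A : Type*} (a b : A) : ℕ → A := fun n =>
  let d := Nat.digits 2 n
  if ((List.range d.length).filter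
      fun i => (d.getD i 0 == 1) && (d.getD (i + 1) 0 == 1)).length % 2 = 0
  then a else b



def rsF (d : List ℕ) : ℕ :=
  ((List.range d.length).filter fun i => (d.getD i 0 == 1) && (d.getD (i + 1) 0 == 1)).length

def rsf (n : ℕ) : ℕ := rsF (Nat.digits 2 n)

lemma rsF_cons (x : ℕ) (l : List ℕ) :
    rsF (x :: l) = (if x = 1 ∧ l.getD 0 0 = 1 then 1 else 0) + rsF l := by
  unfold rsF
  rw [List.length_cons, List.range_succ_eq_map, List.filter_cons]
  simp only [List.getD_cons_zero, List.getD_cons_succ, List.filter_map, Function.comp_def,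
    List.length_map]
  split <;> split <;> simp_all <;> omega

lemma digits_getD_zero (m : ℕ) : (Nat.digits 2 m).getD 0 0 = m % 2 := by
  rcases Nat.eq_zero_or_pos m with h | h
  · simp [h]
  · rw [Nat.digits_def' (by norm_num) h]; simp

lemma rsf_two_mul (m : ℕ) : rsf (2 * m) = rsf m := by
  rcases Nat.eq_zero_or_pos m with h | h
  · simp [h]
  · unfold rsf
    rw [Nat.digits_def' (by norm_num) (by omega : 0 < 2 * m)]
    rw [Nat.mul_mod_right, Nat.mul_div_cancel_left _ (by norm_num), rsF_cons]
    simp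

lemma rsf_two_mul_add_one (m : ℕ) : rsf (2 * m + 1) = (m % 2) + rsf m := by
  unfold rsf
  rw [Nat.digits_def' (by norm_num) (by omega : 0 < 2 * m + 1)]
  have h1 : (2 * m + 1) % 2 = 1 := by omega
  have h2 : (2 * m + 1) / 2 = m := by omega
  rw [h1, h2, rsF_cons, digits_getD_zero]
  rcases Nat.mod_two_eq_zero_or_one m with h | h <;> simp [h]

lemma rsf_add_pow (j : ℕ) : ∀ i < 2 ^ j, rsf (i + 2 ^ (j + 1)) = rsf i := by
  induction j with
  | zero =>
      intro i hi
      interval_cases i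
      have h2 : rsf 2 = rsf 1 := by simpa using rsf_two_mul 1
      have h1 : rsf 1 = rsf 0 := by simpa using rsf_two_mul_add_one 0
      simpa [h2] using h1
  | succ j ih =>
      intro i hi
      rcases Nat.even_or_odd i with ⟨m, hm⟩ | ⟨m, hm⟩
      · have hm' : m < 2 ^ (j + 1) := by omega
        have : i + 2 ^ (j + 2) = 2 * (m + 2 ^ (j + 1)) := by ring_nf; omega
        rw [this, rsf_two_mul, ih _ (by omega), hm, ← two_mul, rsf_two_mul]
      · have hm' : m < 2 ^ (j + 1) := by omega
        have : i + 2 ^ (j + 2) = 2 * (m + 2 ^ (j + 1)) + 1 := by ring_nf; omega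
        rw [this, rsf_two_mul_add_one, ih _ (by omega), hm, rsf_two_mul_add_one]
        have : (m + 2 ^ (j + 1)) % 2 = m % 2 := by
          have : 2 ^ (j + 1) % 2 = 0 := by
            simp [Nat.pow_mod]
          omega
        rw [this]

section Main
variable {A : Type*} (a b : A)

lemma rs_eq (n : ℕ) : rudinShapiroWord a b n = if rsf n % 2 = 0 then a else b := rfl

lemma rs_parity (hab : a ≠ b) {m n : ℕ} (h : rudinShapiroWord a b m = rudinShapiroWord a b n) :
    rsf m % 2 = rsf n % 2 := by
  rw [rs_eq, rs_eq] at h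
  split at h <;> split at h <;>
    first
      | omega
      | exact absurd h hab
      | exact absurd h.symm hab

lemma rs_two_mul (m : ℕ) : rudinShapiroWord a b (2 * m) = rudinShapiroWord a b m := by
  rw [rs_eq, rs_eq, rsf_two_mul]

lemma rs_shift (k i : ℕ) (hi : i < 2 ^ k) :
    rudinShapiroWord a b (2 ^ (k + 1) + i) = rudinShapiroWord a b i := by
  rw [rs_eq, rs_eq, Nat.add_comm, rsf_add_pow k i hi]

lemma rs_not_periodic (hab : a ≠ b) : ∀ k, 0 < k → ∀ N : ℕ,
    (∀ n, N ≤ n → rudinShapiroWord a b (n + k) = rudinShapiroWord a b n) → False := by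
  intro k
  induction k using Nat.strong_induction_on with
  | _ k ih =>
    intro hk N h
    have hmult : ∀ j n, N ≤ n → rudinShapiroWord a b (n + j * k) = rudinShapiroWord a b n := by
      intro j
      induction j with
      | zero => simp
      | succ j ihj =>
          intro n hn
          have e : n + (j + 1) * k = (n + j * k) + k := by ring
          rw [e, h _ (le_trans hn (Nat.le_add_right _ _)), ihj n hn]
    -- k is even
    have h4 : rudinShapiroWord a b (4 * N + 3 + 4 * k) = rudinShapiroWord a b (4 * N + 3) :=
      hmult 4 (4 * N + 3) (by omega)
    have p1 := rs_parity a b hab h4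
    have p2 := rs_parity a b hab (h N le_rfl)
    have e1 : 4 * N + 3 + 4 * k = 2 * (2 * (N + k) + 1) + 1 := by ring
    have e2 : 4 * N + 3 = 2 * (2 * N + 1) + 1 := by ring
    rw [e1, e2, rsf_two_mul_add_one, rsf_two_mul_add_one, rsf_two_mul_add_one,
      rsf_two_mul_add_one] at p1
    have hkeven : k % 2 = 0 := by omega
    obtain ⟨k', rfl⟩ : ∃ k', k = 2 * k' := ⟨k / 2, by omega⟩
    have hk' : 0 < k' := by omega
    refine ih k' (by omega) hk' N ?_
    intro n hn
    have h2 := h (2 * n) (by omega)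
    have e3 : 2 * n + 2 * k' = 2 * (n + k') := by ring
    rw [e3, rs_two_mul, rs_two_mul] at h2
    exact h2

lemma prefix_lemma (f : ℕ → A) (m p : ℕ) (hshift : ∀ i < p, f (m + i) = f i) :
    IsPrefixOf ((List.range m).map f ++ (List.range p).map f) f := by
  intro i h
  simp only [List.get_eq_getElem]
  rcases lt_or_ge i m with hi | hi
  · rw [List.getElem_append_left (by simpa using hi)]
    simp
  · have hi2 : i - m < p := by
      have := h
      simp only [List.length_append, List.length_map, List.length_range] at this
      omega
    rw [List.getElem_append_right (by simpa using hi)]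
    simp only [List.getElem_map, List.getElem_range, List.length_map, List.length_range]
    rw [← hshift (i - m) hi2]
    congr 1
    omega

theorem rudinShapiro_spade_aux (hab : a ≠ b) :
    Spade (rudinShapiroWord a b) 25 := by
  set ω := rudinShapiroWord a b with hω
  constructor
  · rintro ⟨N, k, hk, h⟩
    exact rs_not_periodic a b hab k hk N h
  · refine ⟨fun _ => [], fun n => (List.range (2 ^ n)).map ω,
      fun n => ((List.range (2 ^ (n + 1))).map ω).drop (2 ^ n), ?_, ?_, ?_, ?_, ?_⟩
    · intro n
      have hl : 0 < ((List.range (2 ^ n)).map ω).length := by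
        simp only [List.length_map, List.length_range]
        exact Nat.pow_pos (by norm_num)
      exact List.ne_nil_of_length_pos hl
    · intro n
      have htake : (List.range (2 ^ n)).map ω =
          ((List.range (2 ^ (n + 1))).map ω).take (2 ^ n) := by
        have hmin : min (2 ^ n) (2 ^ (n + 1)) = 2 ^ n :=
          Nat.min_eq_left (Nat.pow_le_pow_right (by norm_num) (by omega))
        rw [← List.map_take, List.take_range, hmin]
      have hUV : (List.range (2 ^ n)).map ω ++
          (((List.range (2 ^ (n + 1))).map ω).drop (2 ^ n)) =
          (List.range (2 ^ (n + 1))).map ω := by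
        conv_lhs => rw [htake]
        exact List.take_append_drop _ _
      have hP : ([] : List A) ++ ((List.range (2 ^ n)).map ω ++
          ((((List.range (2 ^ (n + 1))).map ω).drop (2 ^ n)) ++ (List.range (2 ^ n)).map ω)) =
          (List.range (2 ^ (n + 1))).map ω ++ (List.range (2 ^ n)).map ω := by
        rw [List.nil_append, ← List.append_assoc, hUV]
      rw [hP]
      exact prefix_lemma ω (2 ^ (n + 1)) (2 ^ n) (fun i hi => rs_shift a b n i hi)
    · intro n
      have hlen : (((List.range (2 ^ (n + 1))).map ω).drop (2 ^ n)).length = 2 ^ n := by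
        simp only [List.length_drop, List.length_map, List.length_range]
        have : 2 ^ (n + 1) = 2 ^ n * 2 := pow_succ 2 n
        omega
      rw [hlen]
      simp only [List.length_map, List.length_range]
      have h0 : (0 : ℝ) < (2 : ℝ) ^ n := by positivity
      push_cast
      linarith
    · intro n
      simp only [List.length_nil, Nat.cast_zero, List.length_map, List.length_range]
      positivity
    · intro m
      exact ⟨m, by simpa using Nat.lt_two_pow_self (n := m)⟩

end Main

/-- **Proposition.** The Rudin–Shapiro word satisfies ♠ with constant `25`. -/
theorem rudinShapiro_spade {A : Type*} (a b : A) (hab : a ≠ b) :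
    Spade (rudinShapiroWord a b) 25 :=
  rudinShapiro_spade_aux a b hab
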